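/- With the QBF tableau construction below (for n ≥ 1, matrix ψ, quantifiers q, increment function G, and tableau H), the following invariant holds: for every i with 0 ≤ i ≤ n and every S < 2^(2n+1) of the form S = w·2^(2i+1) + 2^(2i) (w ∈ ℕ), we have G(i, S, H(i, S)) = (−1)^(bit(S, 2i+2)) · ε, where ε = 1 if Φ_i(fun k => bit(S, 2(i+k)+1) XOR bit(S, 2(i+k)+2)) is true and ε = 0 otherwise. -/

import Mathlib

/-- Prepend `c` as the value of the innermost remaining variable. -/
def qbfPrepend {n i : ℕ} (c : Bool) (b : Fin (n - (i + 1)) → Bool) :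
    Fin (n - i) → Bool :=
  fun k => if h : (k : ℕ) = 0 then c else b ⟨(k : ℕ) - 1, by have hk := k.isLt; omega⟩

/-- Partial evaluations `Φ_i` of the quantified Boolean formula:
`Φ_0 = ψ`, and `Φ_{i+1}(b)` quantifies over the innermost remaining variable,
existentially if `q(i) = true` and universally if `q(i) = false`. -/
def qbfPhi (n : ℕ) (ψ : (Fin n → Bool) → Bool) (q : Fin n → Bool) :
    (i : ℕ) → (Fin (n - i) → Bool) → Bool
  | 0 => ψ
  | (i + 1) => fun b =>
      if h : i < n then
        if q ⟨i, h⟩ then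
          qbfPhi n ψ q i (qbfPrepend false b) || qbfPhi n ψ q i (qbfPrepend true b)
        else
          qbfPhi n ψ q i (qbfPrepend false b) && qbfPhi n ψ q i (qbfPrepend true b)
      else false

/-- The increment function `G` of the discrete initial value problem encoding QBF. -/
def qbfG (n : ℕ) (ψ : (Fin n → Bool) → Bool) (q : Fin n → Bool)
    (i : ℕ) (S : ℕ) (Y : ℤ) : ℤ :=
  if i ≤ n ∧ S % 2 ^ (2 * i + 1) = 2 ^ (2 * i) then
    (if S.testBit (2 * i + 2) then -1 else 1) *
      (if i = 0 then
        (if ψ (fun k => xor (S.testBit (2 * (k : ℕ) + 1)) (S.testBit (2 * (k : ℕ) + 2)))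
          then 1 else 0)
      else
        if h : i - 1 < n then
          (if q ⟨i - 1, h⟩ then (if 1 ≤ Y then 1 else 0) else (if 2 ≤ Y then 1 else 0))
        else 0)
  else 0

/-- The tableau `H` of the discrete initial value problem:
`H(i, 0) = H(0, T) = 0` and `H(i+1, T+1) = H(i+1, T) + G(i, T, H(i, T))`. -/
def qbfH (n : ℕ) (ψ : (Fin n → Bool) → Bool) (q : Fin n → Bool) : ℕ → ℕ → ℤ
  | _, 0 => 0
  | 0, _ => 0
  | (i + 1), (T + 1) => qbfH n ψ q (i + 1) T + qbfG n ψ q i T (qbfH n ψ q i T)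


section QbfHelpers

lemma qbf_tb1 (u a r j : ℕ) (h : r < 2^a) : (u * 2^a + r).testBit (a + j) = u.testBit j := by
  have h1 : (u * 2^a + r) / 2^(a+j) = u / 2^j := by
    rw [pow_add, ← Nat.div_div_eq_div_mul, mul_comm u, Nat.mul_add_div (by positivity),
      Nat.div_eq_of_lt h, add_zero]
  simp [Nat.testBit_eq_decide_div_mod_eq, h1]

variable (n : ℕ) (ψ : (Fin n → Bool) → Bool) (q : Fin n → Bool)

lemma qbf_hstep (i T : ℕ) :
    qbfH n ψ q (i+1) (T+1) = qbfH n ψ q (i+1) T + qbfG n ψ q i T (qbfH n ψ q i T) := rfl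

lemma qbf_gzero (i S : ℕ) (Y : ℤ) (h : S % 2 ^ (2*i+1) ≠ 2^(2*i)) : qbfG n ψ q i S Y = 0 := by
  simp [qbfG, h]

lemma qbf_hskip (i a : ℕ) : ∀ d, (∀ t, a ≤ t → t < a + d → t % 2^(2*i+1) ≠ 2^(2*i)) →
    qbfH n ψ q (i+1) (a+d) = qbfH n ψ q (i+1) a := by
  intro d
  induction d with
  | zero => intro _; rfl
  | succ d ih =>
    intro hc
    rw [show a + (d+1) = (a+d)+1 from rfl, qbf_hstep,
      qbf_gzero n ψ q i _ _ (hc _ (by omega) (by omega)),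
      add_zero, ih (fun t h1 h2 => hc t h1 (by omega))]

lemma qbf_hblock (i u : ℕ) :
    qbfH n ψ q (i+1) ((u+1) * 2^(2*i+1)) =
      qbfH n ψ q (i+1) (u * 2^(2*i+1)) +
        qbfG n ψ q i (u*2^(2*i+1)+2^(2*i)) (qbfH n ψ q i (u*2^(2*i+1)+2^(2*i))) := by
  have hp : (2:ℕ)^(2*i+1) = 2^(2*i) + 2^(2*i) := by rw [pow_succ]; ring
  have hpos : 0 < (2:ℕ)^(2*i) := by positivity
  have key0 : ∀ s, s < 2^(2*i+1) → (u * 2^(2*i+1) + s) % 2^(2*i+1) = s := by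
    intro s hs
    rw [mul_comm u, Nat.mul_add_mod, Nat.mod_eq_of_lt hs]
  have key : ∀ t, u * 2^(2*i+1) ≤ t → t < u * 2^(2*i+1) + 2^(2*i+1) →
      t % 2^(2*i+1) = t - u * 2^(2*i+1) := by
    intro t h1 h2
    have := key0 (t - u * 2^(2*i+1)) (by omega)
    rw [show u * 2^(2*i+1) + (t - u * 2^(2*i+1)) = t by omega] at this
    exact this
  have e1 : qbfH n ψ q (i+1) (u * 2^(2*i+1) + 2^(2*i)) = qbfH n ψ q (i+1) (u * 2^(2*i+1)) := by
    apply qbf_hskip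
    intro t h1 h2 hmod
    have := key t h1 (by omega)
    omega
  have e2 : qbfH n ψ q (i+1) ((u+1) * 2^(2*i+1)) =
      qbfH n ψ q (i+1) ((u * 2^(2*i+1) + 2^(2*i) + 1) + (2^(2*i) - 1)) := by
    congr 1
    have : (u+1) * 2^(2*i+1) = u * 2^(2*i+1) + 2^(2*i+1) := by ring
    omega
  rw [e2]
  rw [qbf_hskip n ψ q i _ _ ?_, qbf_hstep, e1]
  intro t h1 h2 hmod
  have := key t (by omega) (by omega)
  omega

lemma qbf_gval (i u : ℕ)
    (hT : u * 2^(2*i+1) + 2^(2*i) < 2^(2*n+1))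
    (IH : ∀ S < 2 ^ (2 * n + 1), (∃ w : ℕ, S = w * 2 ^ (2 * i + 1) + 2 ^ (2 * i)) →
      qbfG n ψ q i S (qbfH n ψ q i S) =
        (if S.testBit (2 * i + 2) then -1 else 1) *
          (if qbfPhi n ψ q i
              (fun k => xor (S.testBit (2 * (i + (k : ℕ)) + 1))
                            (S.testBit (2 * (i + (k : ℕ)) + 2)))
            then 1 else 0)) :
    qbfG n ψ q i (u*2^(2*i+1)+2^(2*i)) (qbfH n ψ q i (u*2^(2*i+1)+2^(2*i))) =
      (if u.testBit 1 then -1 else 1) *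
        (if qbfPhi n ψ q i
            (fun k => xor (u.testBit (2*(k:ℕ))) (u.testBit (2*(k:ℕ)+1))) then 1 else 0) := by
  have h2 : (2:ℕ)^(2*i) < 2^(2*i+1) := by
    have hpos : 0 < (2:ℕ)^(2*i) := by positivity
    rw [pow_succ]; omega
  have hb : ∀ j, (u * 2^(2*i+1) + 2^(2*i)).testBit (2*i+1+j) = u.testBit j :=
    fun j => qbf_tb1 u _ _ j h2
  have hfun : (fun k : Fin (n-i) =>
      xor ((u * 2^(2*i+1) + 2^(2*i)).testBit (2*(i+(k:ℕ))+1))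
          ((u * 2^(2*i+1) + 2^(2*i)).testBit (2*(i+(k:ℕ))+2))) =
      fun k : Fin (n-i) => xor (u.testBit (2*(k:ℕ))) (u.testBit (2*(k:ℕ)+1)) := by
    funext k
    rw [show 2*(i+(k:ℕ))+1 = 2*i+1+2*(k:ℕ) by ring,
      show 2*(i+(k:ℕ))+2 = 2*i+1+(2*(k:ℕ)+1) by ring, hb, hb]
  rw [IH _ hT ⟨u, rfl⟩, hfun, show 2*i+2 = 2*i+1+1 by ring, hb 1]

lemma qbf_afun (i m r : ℕ) (hr : r < 4) :
    (fun k : Fin (n-i) => xor ((4*m+r).testBit (2*(k:ℕ))) ((4*m+r).testBit (2*(k:ℕ)+1))) =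
      qbfPrepend (n := n) (i := i) (decide (r = 1) || decide (r = 2))
        (fun k : Fin (n-(i+1)) => xor (m.testBit (2*(k:ℕ))) (m.testBit (2*(k:ℕ)+1))) := by
  funext k
  unfold qbfPrepend
  by_cases hk : (k:ℕ) = 0
  · rw [dif_pos hk, hk]
    simp only [Nat.mul_zero, Nat.zero_add]
    interval_cases r <;> simp [Nat.testBit_eq_decide_div_mod_eq] <;> omega
  · rw [dif_neg hk]
    have e1 : (4*m+r).testBit (2*(k:ℕ)) = m.testBit (2*((k:ℕ)-1)) := by
      have := qbf_tb1 m 2 r (2*((k:ℕ)-1)) (by omega)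
      rw [show m*2^2+r = 4*m+r by ring] at this
      rw [show 2*(k:ℕ) = 2+2*((k:ℕ)-1) by omega]
      exact this
    have e2 : (4*m+r).testBit (2*(k:ℕ)+1) = m.testBit (2*((k:ℕ)-1)+1) := by
      have := qbf_tb1 m 2 r (2*((k:ℕ)-1)+1) (by omega)
      rw [show m*2^2+r = 4*m+r by ring] at this
      rw [show 2*(k:ℕ)+1 = 2+(2*((k:ℕ)-1)+1) by omega]
      exact this
    rw [e1, e2]

lemma qbf_sgn (m r : ℕ) (hr : r < 4) :
    (4*m+r).testBit 1 = (decide (r = 2) || decide (r = 3)) := by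
  interval_cases r <;> simp [Nat.testBit_eq_decide_div_mod_eq] <;> omega

end QbfHelpers

section QbfHelpers2
variable (n : ℕ) (ψ : (Fin n → Bool) → Bool) (q : Fin n → Bool)

lemma qbf_blockzero (i : ℕ)
    (IH : ∀ S < 2 ^ (2 * n + 1), (∃ w : ℕ, S = w * 2 ^ (2 * i + 1) + 2 ^ (2 * i)) →
      qbfG n ψ q i S (qbfH n ψ q i S) =
        (if S.testBit (2 * i + 2) then -1 else 1) *
          (if qbfPhi n ψ q i
              (fun k => xor (S.testBit (2 * (i + (k : ℕ)) + 1))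
                            (S.testBit (2 * (i + (k : ℕ)) + 2)))
            then 1 else 0)) :
    ∀ m, 4*m*2^(2*i+1) ≤ 2^(2*n+1) → qbfH n ψ q (i+1) (4*m*2^(2*i+1)) = 0 := by
  intro m
  induction m with
  | zero => intro _; rw [show 4*0*2^(2*i+1) = 0 by ring]; rfl
  | succ m ih =>
    intro hm
    have hpos : 0 < (2:ℕ)^(2*i) := by positivity
    have hp : (2:ℕ)^(2*i+1) = 2^(2*i) + 2^(2*i) := by rw [pow_succ]; ring
    have hle : 4*m*2^(2*i+1) ≤ 2^(2*n+1) := by nlinarith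
    have hT : ∀ r < 4, (4*m+r) * 2^(2*i+1) + 2^(2*i) < 2^(2*n+1) := by
      intro r hr
      have : (4*m+r+1) * 2^(2*i+1) ≤ (4*m+4) * 2^(2*i+1) :=
        Nat.mul_le_mul_right _ (by omega)
      have h2 : (4*m+r+1) * 2^(2*i+1) = (4*m+r) * 2^(2*i+1) + 2^(2*i+1) := by ring
      have h3 : 4*(m+1)*2^(2*i+1) = (4*m+4) * 2^(2*i+1) := by ring
      omega
    have g0 := qbf_gval n ψ q i (4*m) (by simpa using hT 0 (by norm_num)) IH
    have g1 := qbf_gval n ψ q i (4*m+1) (hT 1 (by norm_num)) IH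
    have g2 := qbf_gval n ψ q i (4*m+2) (hT 2 (by norm_num)) IH
    have g3 := qbf_gval n ψ q i (4*m+3) (hT 3 (by norm_num)) IH
    have a0 : (fun k : Fin (n-i) => xor ((4*m).testBit (2*(k:ℕ))) ((4*m).testBit (2*(k:ℕ)+1)))
        = qbfPrepend false
          (fun k : Fin (n-(i+1)) => xor (m.testBit (2*(k:ℕ))) (m.testBit (2*(k:ℕ)+1))) := by
      have := qbf_afun n i m 0 (by norm_num); simpa using this
    have a1 : (fun k : Fin (n-i) => xor ((4*m+1).testBit (2*(k:ℕ))) ((4*m+1).testBit (2*(k:ℕ)+1)))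
        = qbfPrepend true
          (fun k : Fin (n-(i+1)) => xor (m.testBit (2*(k:ℕ))) (m.testBit (2*(k:ℕ)+1))) := by
      have := qbf_afun n i m 1 (by norm_num); simpa using this
    have a2 : (fun k : Fin (n-i) => xor ((4*m+2).testBit (2*(k:ℕ))) ((4*m+2).testBit (2*(k:ℕ)+1)))
        = qbfPrepend true
          (fun k : Fin (n-(i+1)) => xor (m.testBit (2*(k:ℕ))) (m.testBit (2*(k:ℕ)+1))) := by
      have := qbf_afun n i m 2 (by norm_num); simpa using this
    have a3 : (fun k : Fin (n-i) => xor ((4*m+3).testBit (2*(k:ℕ))) ((4*m+3).testBit (2*(k:ℕ)+1)))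
        = qbfPrepend false
          (fun k : Fin (n-(i+1)) => xor (m.testBit (2*(k:ℕ))) (m.testBit (2*(k:ℕ)+1))) := by
      have := qbf_afun n i m 3 (by norm_num); simpa using this
    have t0 : (4*m).testBit 1 = false := by simpa using qbf_sgn m 0 (by norm_num)
    have t1 : (4*m+1).testBit 1 = false := by simpa using qbf_sgn m 1 (by norm_num)
    have t2 : (4*m+2).testBit 1 = true := by simpa using qbf_sgn m 2 (by norm_num)
    have t3 : (4*m+3).testBit 1 = true := by simpa using qbf_sgn m 3 (by norm_num)
    rw [a0, t0] at g0
    rw [a1, t1] at g1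
    rw [a2, t2] at g2
    rw [a3, t3] at g3
    rw [show 4*(m+1)*2^(2*i+1) = ((4*m+3)+1)*2^(2*i+1) by ring, qbf_hblock,
      show (4*m+3) = (4*m+2)+1 from rfl, qbf_hblock,
      show (4*m+2) = (4*m+1)+1 from rfl, qbf_hblock,
      show (4*m+1) = (4*m)+1 from rfl, qbf_hblock, ih hle]
    rw [show (4*m)+1 = 4*m+1 from rfl, show (4*m+1)+1 = 4*m+2 from rfl,
      show (4*m+2)+1 = 4*m+3 from rfl] at *
    rw [g0, g1, g2, g3]
    cases hP0 : qbfPhi n ψ q i (qbfPrepend false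
        (fun k : Fin (n-(i+1)) => xor (m.testBit (2*(k:ℕ))) (m.testBit (2*(k:ℕ)+1)))) <;>
      cases hP1 : qbfPhi n ψ q i (qbfPrepend true
        (fun k : Fin (n-(i+1)) => xor (m.testBit (2*(k:ℕ))) (m.testBit (2*(k:ℕ)+1)))) <;>
      norm_num

end QbfHelpers2


/-- Invariant of the QBF tableau: at each row `i ≤ n` and each time
`S = w·2^(2i+1) + 2^(2i) < 2^(2n+1)`, the increment `G(i, S, H(i, S))` equals
`(−1)^(bit(S,2i+2))` times the truth value of `Φ_i` evaluated at the assignment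
read off from the higher bits of `S`. -/
theorem qbf_tableau_invariant
    (n : ℕ) (hn : 1 ≤ n) (ψ : (Fin n → Bool) → Bool) (q : Fin n → Bool) :
    ∀ i ≤ n, ∀ S < 2 ^ (2 * n + 1), (∃ w : ℕ, S = w * 2 ^ (2 * i + 1) + 2 ^ (2 * i)) →
      qbfG n ψ q i S (qbfH n ψ q i S) =
        (if S.testBit (2 * i + 2) then -1 else 1) *
          (if qbfPhi n ψ q i
              (fun k => xor (S.testBit (2 * (i + (k : ℕ)) + 1))
                            (S.testBit (2 * (i + (k : ℕ)) + 2)))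
            then 1 else 0) := by
  intro i
  induction i with
  | zero =>
    intro _ S hS hex
    obtain ⟨w, rfl⟩ := hex
    have hmod : (w * 2 ^ (2*0+1) + 2^(2*0)) % 2 ^ (2*0+1) = 2^(2*0) := by norm_num <;> omega
    simp only [qbfG]
    rw [if_pos ⟨Nat.zero_le n, hmod⟩]
    norm_num
    exact rfl
  | succ i ih =>
    intro hin S hS hex
    obtain ⟨w, rfl⟩ := hex
    have hi : i < n := by omega
    have IH := ih (by omega)
    have hpos : 0 < (2:ℕ)^(2*i+1) := by positivity
    have hSrw : w * 2 ^ (2 * (i+1) + 1) + 2 ^ (2 * (i+1)) = (4*w+2) * 2^(2*i+1) := by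
      rw [show 2*(i+1)+1 = (2*i+1)+2 by ring, show 2*(i+1) = (2*i+1)+1 by ring,
        pow_add, pow_succ]
      ring
    -- value of H at row i+1, time S
    have hT0 : (4*w) * 2^(2*i+1) + 2^(2*i) < 2^(2*n+1) := by
      have h2 : (2:ℕ)^(2*i+1) = 2^(2*i) + 2^(2*i) := by rw [pow_succ]; ring
      have : (4*w) * 2^(2*i+1) + 2^(2*i+1) ≤ (4*w+2) * 2^(2*i+1) := by nlinarith
      omega
    have hT1 : (4*w+1) * 2^(2*i+1) + 2^(2*i) < 2^(2*n+1) := by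
      have h2 : (2:ℕ)^(2*i+1) = 2^(2*i) + 2^(2*i) := by rw [pow_succ]; ring
      have : (4*w+1) * 2^(2*i+1) + 2^(2*i+1) ≤ (4*w+2) * 2^(2*i+1) := by nlinarith
      omega
    have hz : qbfH n ψ q (i+1) (4*w*2^(2*i+1)) = 0 :=
      qbf_blockzero n ψ q i IH w (by nlinarith [hSrw ▸ hS])
    have g0 := qbf_gval n ψ q i (4*w) (by simpa using hT0) IH
    have g1 := qbf_gval n ψ q i (4*w+1) hT1 IH
    have a0 : (fun k : Fin (n-i) => xor ((4*w).testBit (2*(k:ℕ))) ((4*w).testBit (2*(k:ℕ)+1)))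
        = qbfPrepend false
          (fun k : Fin (n-(i+1)) => xor (w.testBit (2*(k:ℕ))) (w.testBit (2*(k:ℕ)+1))) := by
      have := qbf_afun n i w 0 (by norm_num); simpa using this
    have a1 : (fun k : Fin (n-i) => xor ((4*w+1).testBit (2*(k:ℕ))) ((4*w+1).testBit (2*(k:ℕ)+1)))
        = qbfPrepend true
          (fun k : Fin (n-(i+1)) => xor (w.testBit (2*(k:ℕ))) (w.testBit (2*(k:ℕ)+1))) := by
      have := qbf_afun n i w 1 (by norm_num); simpa using this
    have t0 : (4*w).testBit 1 = false := by simpa using qbf_sgn w 0 (by norm_num)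
    have t1 : (4*w+1).testBit 1 = false := by simpa using qbf_sgn w 1 (by norm_num)
    rw [a0, t0] at g0
    rw [a1, t1] at g1
    have hHS : qbfH n ψ q (i+1) (w * 2 ^ (2 * (i+1) + 1) + 2 ^ (2 * (i+1))) =
        (if qbfPhi n ψ q i (qbfPrepend false
            (fun k : Fin (n-(i+1)) => xor (w.testBit (2*(k:ℕ))) (w.testBit (2*(k:ℕ)+1))))
          then 1 else 0) +
        (if qbfPhi n ψ q i (qbfPrepend true
            (fun k : Fin (n-(i+1)) => xor (w.testBit (2*(k:ℕ))) (w.testBit (2*(k:ℕ)+1))))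
          then 1 else 0) := by
      rw [hSrw, show (4*w+2) = (4*w+1)+1 from rfl, qbf_hblock,
        show (4*w+1) = (4*w)+1 from rfl, qbf_hblock, hz,
        show (4*w)+1 = 4*w+1 from rfl, g0, g1]
      simp
    -- the assignment read from S for row i+1 equals the one read from w
    have hargs : (fun k : Fin (n-(i+1)) =>
        xor ((w * 2 ^ (2 * (i+1) + 1) + 2 ^ (2 * (i+1))).testBit (2*((i+1)+(k:ℕ))+1)) ((w * 2 ^ (2 * (i+1) + 1) + 2 ^ (2 * (i+1))).testBit (2*((i+1)+(k:ℕ))+2))) =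
        (fun k : Fin (n-(i+1)) => xor (w.testBit (2*(k:ℕ))) (w.testBit (2*(k:ℕ)+1))) := by
      funext k
      have hlt : (2:ℕ)^(2*(i+1)) < 2^(2*(i+1)+1) := by
        have : (0:ℕ) < 2^(2*(i+1)) := by positivity
        rw [pow_succ]; omega
      have hb : ∀ j, (w * 2 ^ (2 * (i+1) + 1) + 2 ^ (2 * (i+1))).testBit (2*(i+1)+1+j) = w.testBit j := fun j => qbf_tb1 w _ _ j hlt
      rw [show 2*((i+1)+(k:ℕ))+1 = 2*(i+1)+1+2*(k:ℕ) by ring,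
        show 2*((i+1)+(k:ℕ))+2 = 2*(i+1)+1+(2*(k:ℕ)+1) by ring, hb, hb]
    have hmod : (w * 2 ^ (2 * (i+1) + 1) + 2 ^ (2 * (i+1))) % 2 ^ (2*(i+1)+1) = 2^(2*(i+1)) := by
      have hlt : (2:ℕ)^(2*(i+1)) < 2^(2*(i+1)+1) := by
        have : (0:ℕ) < 2^(2*(i+1)) := by positivity
        rw [pow_succ]; omega
      rw [mul_comm w, Nat.mul_add_mod, Nat.mod_eq_of_lt hlt]
    simp only [qbfG]
    rw [if_pos ⟨hin, hmod⟩, if_neg (Nat.succ_ne_zero i)]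
    simp only [Nat.add_sub_cancel]
    rw [dif_pos hi]
    rw [hHS]
    rw [hargs]
    simp only [qbfPhi]
    simp only [dif_pos hi]
    cases hq : q ⟨i, hi⟩ <;>
      cases hP0 : qbfPhi n ψ q i (qbfPrepend false
          (fun k : Fin (n-(i+1)) => xor (w.testBit (2*(k:ℕ))) (w.testBit (2*(k:ℕ)+1)))) <;>
      cases hP1 : qbfPhi n ψ q i (qbfPrepend true
          (fun k : Fin (n-(i+1)) => xor (w.testBit (2*(k:ℕ))) (w.testBit (2*(k:ℕ)+1)))) <;>
      norm_num
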